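/- The fragment-based deadlock-detection algorithm, which processes paths one at a time and for each edge registers the singleton fragment and all extensions/concatenations with previously stored fragments, returns a potential cyclic deadlock if one exists in the input set of paths, and otherwise returns NONE; correctness is proved by induction on the number of processed paths. -/

import Mathlib

open scoped Classical

/-- An OTIMAPP path set: `n` agents, agent `i` follows the path
`loc i 0, loc i 1, ..., loc i (L i)`; `loc i 0` is its start and `loc i (L i)` its goal. -/
structure OTI (V : Type) (n : ℕ) where
  L : Fin n → ℕ
  loc : Fin n → ℕ → V

namespace OTI

variable {V : Type} {n : ℕ}

/-- Activation of agent `i` in configuration `c` (clocks): the agent advances iff it is not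
at the end of its path and its next vertex is unoccupied. -/
noncomputable def step (P : OTI V n) (c : Fin n → ℕ) (i : Fin n) : Fin n → ℕ :=
  if c i < P.L i ∧ ∀ j, j ≠ i → P.loc j (c j) ≠ P.loc i (c i + 1)
  then Function.update c i (c i + 1) else c

/-- Configuration after the first `k` activations of execution `e`. -/
noncomputable def run (P : OTI V n) (e : ℕ → Fin n) : ℕ → Fin n → ℕ
  | 0 => fun _ => 0
  | k + 1 => P.step (P.run e k) (e k)

/-- An execution is fair when every agent is activated infinitely often. -/
def Fair (e : ℕ → Fin n) : Prop := ∀ (i : Fin n) (k : ℕ), ∃ m, k ≤ m ∧ e m = i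

/-- All agents reach their goals after finitely many activations. -/
def Terminates (P : OTI V n) (e : ℕ → Fin n) : Prop :=
  ∃ k, ∀ i, P.run e k i = P.L i

/-- A feasible OTIMAPP solution: every fair execution terminates. -/
def Feasible (P : OTI V n) : Prop := ∀ e, Fair e → P.Terminates e

/-- A configuration (assignment of clocks) is reachable by some execution. -/
def Reachable (P : OTI V n) (c : Fin n → ℕ) : Prop := ∃ e k, P.run e k = c

/-- A potential cyclic deadlock: distinct agents `σ 0, …, σ k` with clock values `t`
such that each agent's next vertex is the next agent's current vertex, cyclically. -/
def PotentialCyclic (P : OTI V n) {k : ℕ} (σ : Fin (k + 1) → Fin n)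
    (t : Fin (k + 1) → ℕ) : Prop :=
  Function.Injective σ ∧ (∀ m, t m < P.L (σ m)) ∧
    ∀ m, P.loc (σ m) (t m + 1) = P.loc (σ (m + 1)) (t (m + 1))

/-- A reachable cyclic deadlock: a potential cyclic deadlock whose clock values are realized
by some reachable configuration. -/
def ReachableCyclic (P : OTI V n) {k : ℕ} (σ : Fin (k + 1) → Fin n)
    (t : Fin (k + 1) → ℕ) : Prop :=
  P.PotentialCyclic σ t ∧ ∃ c, P.Reachable c ∧ ∀ m, c (σ m) = t m

/-- A potential terminal deadlock `(i, j, tj)`: agent `i`'s goal lies on `j`'s path. -/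
def PotentialTerminal (P : OTI V n) (i j : Fin n) (tj : ℕ) : Prop :=
  i ≠ j ∧ tj ≤ P.L j ∧ P.loc i (P.L i) = P.loc j tj

/-- A reachable terminal deadlock: some execution puts `i` at its goal and `j` at clock `tj - 1`. -/
def ReachableTerminal (P : OTI V n) (i j : Fin n) (tj : ℕ) : Prop :=
  P.PotentialTerminal i j tj ∧ ∃ c, P.Reachable c ∧ c i = P.L i ∧ c j + 1 = tj

/-- The path set is a set of paths on graph `G` with starts `s` and goals `g`. -/
def OnGraph (P : OTI V n) (G : SimpleGraph V) (s g : Fin n → V) : Prop :=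
  (∀ i, P.loc i 0 = s i) ∧ (∀ i, P.loc i (P.L i) = g i) ∧
    ∀ i t, t < P.L i → G.Adj (P.loc i t) (P.loc i (t + 1))

/-- A fragment: a nonempty chain of (agent, clock) pairs with distinct agents, where each
agent's next vertex equals the next agent's current vertex. -/
def IsFragment (P : OTI V n) (l : List (Fin n × ℕ)) : Prop :=
  l ≠ [] ∧ (l.map Prod.fst).Nodup ∧ (∀ p ∈ l, p.2 < P.L p.1) ∧
    l.Chain' fun p q => P.loc p.1 (p.2 + 1) = P.loc q.1 q.2

/-- The vertex a fragment starts from. -/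
def fragStart (P : OTI V n) (l : List (Fin n × ℕ)) : Option V :=
  l.head?.map fun p => P.loc p.1 p.2

/-- The vertex a fragment ends at. -/
def fragEnd (P : OTI V n) (l : List (Fin n × ℕ)) : Option V :=
  l.getLast?.map fun p => P.loc p.1 (p.2 + 1)

end OTI

namespace OTI

variable {V : Type} {n : ℕ}

/-- Processing one edge `(π_i[j], π_i[j+1])` of agent `i`'s path: register the singleton
fragment, all extensions of stored fragments ending at `π_i[j]` or starting from `π_i[j+1]`,
and all concatenations of agent-disjoint pairs joined through `a_i`. -/
def processEdge [DecidableEq V] (P : OTI V n) (i : Fin n) (j : ℕ)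
    (fs : List (List (Fin n × ℕ))) : List (List (Fin n × ℕ)) :=
  let single : List (Fin n × ℕ) := [(i, j)]
  let toU := fs.filter fun l =>
    decide (P.fragEnd l = some (P.loc i j)) && !((l.map Prod.fst).contains i)
  let fromV := fs.filter fun l =>
    decide (P.fragStart l = some (P.loc i (j + 1))) && !((l.map Prod.fst).contains i)
  fs ++ [single] ++ toU.map (· ++ single) ++ fromV.map (single ++ ·) ++
    (toU.flatMap fun l1 =>
      ((fromV.filter fun l2 =>
          (l1.map Prod.fst).all fun a => !((l2.map Prod.fst).contains a)).map
        fun l2 => l1 ++ single ++ l2))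

/-- Processing all edges of agent `i`'s path. -/
def processPath [DecidableEq V] (P : OTI V n) (i : Fin n)
    (fs : List (List (Fin n × ℕ))) : List (List (Fin n × ℕ)) :=
  (List.range (P.L i)).foldl (fun acc j => P.processEdge i j acc) fs

/-- Processing all paths, one at a time. -/
def allFragments [DecidableEq V] (P : OTI V n) : List (List (Fin n × ℕ)) :=
  (List.finRange n).foldl (fun acc i => P.processPath i acc) []

/-- The detection algorithm: return a registered fragment that ends at its own start
vertex (a potential cyclic deadlock), or `none`. -/
def detect [DecidableEq V] (P : OTI V n) : Option (List (Fin n × ℕ)) :=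
  P.allFragments.find? fun l => decide (P.fragStart l = P.fragEnd l ∧ l ≠ [])

end OTI


set_option linter.unusedSectionVars false

namespace OTI

variable {V : Type} [DecidableEq V] {n : ℕ} (P : OTI V n)

lemma fragEnd_some {l : List (Fin n × ℕ)} {p : Fin n × ℕ} (h : l.getLast? = some p) :
    P.fragEnd l = some (P.loc p.1 (p.2 + 1)) := by
  simp [fragEnd, h]

lemma fragStart_cons (p : Fin n × ℕ) (l : List (Fin n × ℕ)) :
    P.fragStart (p :: l) = some (P.loc p.1 p.2) := rfl

lemma fragEnd_append {a b : List (Fin n × ℕ)} (hb : b ≠ []) :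
    P.fragEnd (a ++ b) = P.fragEnd b := by
  simp [fragEnd, List.getLast?_append, Option.or_of_isSome (List.getLast?_isSome.2 hb)]

lemma fragStart_append {a b : List (Fin n × ℕ)} (ha : a ≠ []) :
    P.fragStart (a ++ b) = P.fragStart a := by
  obtain ⟨x, a, rfl⟩ := List.exists_cons_of_ne_nil ha
  simp [fragStart]

lemma sub_left {a b : List (Fin n × ℕ)} (h : P.IsFragment (a ++ b)) (ha : a ≠ []) :
    P.IsFragment a := by
  obtain ⟨-, h2, h3, h4⟩ := h
  refine ⟨ha, ?_, fun p hp => h3 p (by simp [hp]), (List.isChain_append.1 h4).1⟩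
  exact h2.sublist ((a.sublist_append_left b).map _)

lemma sub_right {a b : List (Fin n × ℕ)} (h : P.IsFragment (a ++ b)) (hb : b ≠ []) :
    P.IsFragment b := by
  obtain ⟨-, h2, h3, h4⟩ := h
  refine ⟨hb, ?_, fun p hp => h3 p (by simp [hp]), (List.isChain_append.1 h4).2.1⟩
  exact h2.sublist ((a.sublist_append_right b).map _)

lemma glue {a b : List (Fin n × ℕ)} (ha : P.IsFragment a) (hb : P.IsFragment b)
    (hj : P.fragEnd a = P.fragStart b)
    (hd : ∀ x ∈ a.map Prod.fst, x ∉ b.map Prod.fst) : P.IsFragment (a ++ b) := by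
  obtain ⟨ha1, ha2, ha3, ha4⟩ := ha
  obtain ⟨hb1, hb2, hb3, hb4⟩ := hb
  refine ⟨by simp [ha1], ?_, ?_, ?_⟩
  · rw [List.map_append, List.nodup_append]
    exact ⟨ha2, hb2, fun x hx y hy hxy => hd x hx (hxy ▸ hy)⟩
  · intro p hp; rcases List.mem_append.1 hp with h | h
    exacts [ha3 p h, hb3 p h]
  · rw [List.Chain', List.isChain_append]
    refine ⟨ha4, hb4, fun x hx y hy => ?_⟩
    have h1 : P.fragEnd a = some (P.loc x.1 (x.2 + 1)) := P.fragEnd_some hx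
    obtain ⟨y', b', rfl⟩ := List.exists_cons_of_ne_nil hb1
    simp only [List.head?_cons, Option.mem_def, Option.some_inj] at hy
    subst hy
    rw [h1, fragStart_cons, Option.some_inj] at hj
    exact hj

lemma single_fragment {i : Fin n} {j : ℕ} (hj : j < P.L i) :
    P.IsFragment [(i, j)] := by
  refine ⟨by simp, by simp, ?_, List.isChain_singleton _⟩
  rintro p hp; simp at hp; subst hp; exact hj

/-- Soundness of one edge-processing step. -/
lemma processEdge_sound {i : Fin n} {j : ℕ} {fs : List (List (Fin n × ℕ))}
    (hj : j < P.L i) (h : ∀ l ∈ fs, P.IsFragment l) :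
    ∀ l ∈ P.processEdge i j fs, P.IsFragment l := by
  intro l hl
  have hsingle : P.IsFragment [(i, j)] := P.single_fragment hj
  simp only [processEdge, List.mem_append, List.mem_map, List.mem_flatMap,
    List.mem_filter, List.mem_singleton, Bool.and_eq_true, Bool.not_eq_true',
    decide_eq_true_eq] at hl
  rcases hl with ((((hl | rfl) | ⟨l1, ⟨hl1, he1, hi1⟩, rfl⟩) | ⟨l2, ⟨hl2, hs2, hi2⟩, rfl⟩) |
    ⟨l1, ⟨hl1, he1, hi1⟩, l2, hl2', rfl⟩)
  case _ => exact h l hl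
  all_goals try (replace hi1 : i ∉ l1.map Prod.fst := by simpa using hi1)
  all_goals try (replace hi2 : i ∉ l2.map Prod.fst := by simpa using hi2)
  · exact hsingle
  · refine P.glue (h _ hl1) hsingle (by rw [he1]; rfl) ?_
    intro x hx; simp only [List.map_cons, List.map_nil, List.mem_singleton]
    rintro rfl; exact hi1 hx
  · refine P.glue hsingle (h _ hl2) (by rw [hs2]; rfl) ?_
    intro x hx; simp only [List.map_cons, List.map_nil, List.mem_singleton] at hx
    subst hx; exact hi2
  · simp only [List.mem_filter, List.all_eq_true, Bool.and_eq_true, Bool.not_eq_true',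
      decide_eq_true_eq] at hl2'
    obtain ⟨⟨hl2, hs2, hi2⟩, hdisj⟩ := hl2'
    replace hi2 : i ∉ l2.map Prod.fst := by simpa using hi2
    replace hdisj : ∀ x ∈ l1.map Prod.fst, x ∉ l2.map Prod.fst := by
      intro x hx; simpa using hdisj x hx
    refine P.glue ?_ (h _ hl2) ?_ ?_
    · refine P.glue (h _ hl1) hsingle (by rw [he1]; rfl) ?_
      intro x hx; simp only [List.map_cons, List.map_nil, List.mem_singleton]
      rintro rfl; exact hi1 hx
    · rw [P.fragEnd_append (by simp : ([(i,j)] : List (Fin n × ℕ)) ≠ []), hs2]; rfl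
    · intro x hx
      simp only [List.map_append, List.mem_append, List.map_cons, List.map_nil,
        List.mem_singleton] at hx
      rcases hx with hx | rfl
      · exact hdisj x hx
      · exact hi2

lemma mem_processEdge_of_mem {i : Fin n} {j : ℕ} {fs : List (List (Fin n × ℕ))}
    {l : List (Fin n × ℕ)} (hl : l ∈ fs) : l ∈ P.processEdge i j fs := by
  simp only [processEdge, List.mem_append]
  exact Or.inl (Or.inl (Or.inl (Or.inl hl)))

/-- Completeness of one edge-processing step. -/
lemma processEdge_complete {i : Fin n} {j : ℕ} {fs : List (List (Fin n × ℕ))}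
    (h : ∀ l, P.IsFragment l → (∀ p ∈ l, p.1.val < i.val ∨ (p.1 = i ∧ p.2 < j)) → l ∈ fs) :
    ∀ l, P.IsFragment l → (∀ p ∈ l, p.1.val < i.val ∨ (p.1 = i ∧ p.2 < j + 1)) →
      l ∈ P.processEdge i j fs := by
  intro l hl hbelow
  by_cases hcase : ∀ p ∈ l, p.1.val < i.val ∨ (p.1 = i ∧ p.2 < j)
  · exact P.mem_processEdge_of_mem (h l hl hcase)
  push_neg at hcase
  obtain ⟨p, hp, hp1, hp2⟩ := hcase
  have hpi : p.1 = i := by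
    rcases hbelow p hp with h' | ⟨h', -⟩
    · omega
    · exact h'
  have hpj : p.2 = j := by
    have hj2 := hp2 hpi
    rcases hbelow p hp with h' | ⟨-, h'⟩ <;> omega
  have hp' : p = (i, j) := Prod.ext hpi hpj
  subst hp'
  obtain ⟨s, t, rfl⟩ := List.append_of_mem hp
  have hl' : P.IsFragment ((s ++ [(i, j)]) ++ t) := by
    simpa [List.append_assoc] using hl
  have hnd : (List.map Prod.fst (s ++ (i, j) :: t)).Nodup := hl.2.1
  rw [List.map_append, List.map_cons, List.nodup_append] at hnd
  obtain ⟨hnds, hndt, hdisj0⟩ := hnd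
  have hit : i ∉ t.map Prod.fst := (List.nodup_cons.1 hndt).1
  have his : i ∉ s.map Prod.fst := fun h' => hdisj0 i h' i List.mem_cons_self rfl
  have hds : ∀ q ∈ s, (q.1 : ℕ) < i.val := by
    intro q hq
    rcases hbelow q (by simp [hq]) with h' | ⟨h', -⟩
    · exact h'
    · exact absurd (h' ▸ List.mem_map_of_mem (f := Prod.fst) hq) his
  have hdt : ∀ q ∈ t, (q.1 : ℕ) < i.val := by
    intro q hq
    rcases hbelow q (by simp [hq]) with h' | ⟨h', -⟩
    · exact h'
    · exact absurd (h' ▸ List.mem_map_of_mem (f := Prod.fst) hq) hit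
  have hch := hl.2.2.2
  rw [List.Chain', List.isChain_append] at hch
  obtain ⟨hchs, hcht, hjoin⟩ := hch
  have hEnds : s ≠ [] → P.fragEnd s = some (P.loc i j) := by
    intro hs
    obtain ⟨x, hx⟩ := Option.isSome_iff_exists.1 (List.getLast?_isSome.2 hs)
    rw [P.fragEnd_some hx]
    exact congrArg some (hjoin x hx (i, j) rfl)
  have hStartt : t ≠ [] → P.fragStart t = some (P.loc i (j + 1)) := by
    intro ht
    obtain ⟨y, t', rfl⟩ := List.exists_cons_of_ne_nil ht
    have h2 := (List.isChain_cons.1 hcht).1 y rfl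
    rw [fragStart_cons]
    exact congrArg some h2.symm
  have hfs : s ≠ [] → s ∈ fs := fun hs =>
    h s (P.sub_left hl hs) (fun q hq => Or.inl (hds q hq))
  have hft : t ≠ [] → t ∈ fs := fun ht =>
    h t (P.sub_right hl' ht) (fun q hq => Or.inl (hdt q hq))
  have hst : ∀ a ∈ s.map Prod.fst, a ∉ t.map Prod.fst :=
    fun a ha h' => hdisj0 a ha a (List.mem_cons_of_mem _ h') rfl
  simp only [processEdge, List.mem_append, List.mem_map, List.mem_flatMap,
    List.mem_filter, List.mem_singleton, Bool.and_eq_true, Bool.not_eq_true',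
    decide_eq_true_eq]
  rcases eq_or_ne s [] with rfl | hs <;> rcases eq_or_ne t [] with rfl | ht
  · exact Or.inl (Or.inl (Or.inl (Or.inr rfl)))
  · refine Or.inl (Or.inr ⟨t, ⟨hft ht, hStartt ht, by simpa using hit⟩, by simp⟩)
  · refine Or.inl (Or.inl (Or.inr ⟨s, ⟨hfs hs, hEnds hs, by simpa using his⟩, by simp⟩))
  · refine Or.inr ⟨s, ⟨hfs hs, hEnds hs, by simpa using his⟩, t,
      ⟨⟨hft ht, hStartt ht, by simpa using hit⟩, ?_⟩, by simp⟩
    simp only [List.all_eq_true, Bool.not_eq_true']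
    intro a ha
    simpa using hst a ha

/-- foldl preserves an invariant. -/
lemma foldl_inv {α β : Type*} {Q : β → Prop} (f : β → α → β) :
    ∀ (l : List α) (b : β), Q b → (∀ b a, a ∈ l → Q b → Q (f b a)) → Q (l.foldl f b)
  | [], b, hb, _ => hb
  | a :: l, b, hb, hstep => foldl_inv f l (f b a) (hstep b a List.mem_cons_self hb)
      (fun b' a' ha' => hstep b' a' (List.mem_cons_of_mem _ ha'))

lemma processPath_sound {i : Fin n} {fs : List (List (Fin n × ℕ))}
    (h : ∀ l ∈ fs, P.IsFragment l) : ∀ l ∈ P.processPath i fs, P.IsFragment l := by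
  rw [processPath]
  exact foldl_inv (Q := fun fs => ∀ l ∈ fs, P.IsFragment l) _ _ fs h
    (fun b j hj hb => P.processEdge_sound (List.mem_range.1 hj) hb)

lemma allFragments_sound : ∀ l ∈ P.allFragments, P.IsFragment l := by
  rw [allFragments]
  exact foldl_inv (Q := fun fs => ∀ l ∈ fs, P.IsFragment l) _ _ []
    (fun l hl => absurd hl List.not_mem_nil) (fun b i _ hb => P.processPath_sound hb)

lemma processPath_complete {i : Fin n} {fs : List (List (Fin n × ℕ))}
    (h : ∀ l, P.IsFragment l → (∀ p ∈ l, (p.1 : ℕ) < i.val) → l ∈ fs) :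
    ∀ l, P.IsFragment l → (∀ p ∈ l, (p.1 : ℕ) < i.val + 1) → l ∈ P.processPath i fs := by
  have key : ∀ m, ∀ l, P.IsFragment l →
      (∀ p ∈ l, (p.1 : ℕ) < i.val ∨ (p.1 = i ∧ p.2 < m)) →
      l ∈ (List.range m).foldl (fun acc j => P.processEdge i j acc) fs := by
    intro m
    induction m with
    | zero =>
      intro l hl hb
      refine h l hl (fun p hp => ?_)
      rcases hb p hp with h' | ⟨-, h'⟩
      · exact h'
      · omega
    | succ m ih =>
      rw [List.range_succ, List.foldl_append, List.foldl_cons, List.foldl_nil]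
      exact P.processEdge_complete ih
  intro l hl hb
  rw [processPath]
  refine key (P.L i) l hl (fun p hp => ?_)
  have h2 := hl.2.2.1 p hp
  rcases Nat.lt_or_ge (p.1 : ℕ) i.val with h' | h'
  · exact Or.inl h'
  · have hpi : p.1 = i := Fin.ext (by have := hb p hp; omega)
    exact Or.inr ⟨hpi, hpi ▸ h2⟩

lemma allFragments_complete : ∀ l, P.IsFragment l → l ∈ P.allFragments := by
  have key : ∀ m, m ≤ n → ∀ l, P.IsFragment l → (∀ p ∈ l, (p.1 : ℕ) < m) →
      l ∈ ((List.finRange n).take m).foldl (fun acc i => P.processPath i acc) [] := by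
    intro m
    induction m with
    | zero =>
      intro _ l hl hb
      obtain ⟨p, hp⟩ := List.exists_mem_of_ne_nil _ hl.1
      exact absurd (hb p hp) (by omega)
    | succ m ih =>
      intro hm l hl hb
      have hmn : m < n := hm
      have hlen : m < (List.finRange n).length := by simpa using hmn
      rw [List.take_succ, List.getElem?_eq_getElem hlen, List.foldl_append]
      simp only [Option.toList_some, List.foldl_cons, List.foldl_nil]
      have hget : (List.finRange n)[m] = (⟨m, hmn⟩ : Fin n) := by
        simp [List.getElem_finRange, Fin.cast]
      rw [hget]
      exact P.processPath_complete (ih (le_of_lt hmn)) l hl hb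
  intro l hl
  have hres := key n le_rfl l hl (fun p _ => p.1.isLt)
  rw [allFragments]
  have : (List.finRange n).take n = List.finRange n := by
    rw [List.take_of_length_le (by simp)]
  rwa [this] at hres

end OTI

/-- the fragment-based deadlock-detection algorithm returns a potential cyclic
deadlock (a fragment ending at its own start) if one exists in the input set of paths, and
otherwise returns NONE. -/
theorem detect_correct {V : Type} [DecidableEq V] {n : ℕ} (P : OTI V n) :
    (∀ l, P.detect = some l → P.IsFragment l ∧ P.fragStart l = P.fragEnd l) ∧
    (P.detect = none → ∀ l, P.IsFragment l → P.fragStart l ≠ P.fragEnd l) := by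
  constructor
  · intro l hdet
    rw [OTI.detect] at hdet
    have hmem := List.mem_of_find?_eq_some hdet
    have hpred := List.find?_some hdet
    simp only [decide_eq_true_eq] at hpred
    exact ⟨P.allFragments_sound l hmem, hpred.1⟩
  · intro hdet l hl hse
    rw [OTI.detect] at hdet
    have hnot := List.find?_eq_none.1 hdet l (P.allFragments_complete l hl)
    simp only [decide_eq_true_eq, not_and] at hnot
    exact hnot hse hl.1
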